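/- arXiv:1506.06945 — 3 statements merged into one kernel-verified Lean document; each statement's English description precedes it below -/
import Mathlib

section
/- Let A ∈ GLₙ(ℤ) be a hyperbolic matrix (no complex eigenvalue of modulus 1), and let f = f_A be the induced hyperbolic toral automorphism. Every continuous map τ : Tⁿ → Tⁿ commuting with f that is surjective is pre-injective: if x, y ∈ Tⁿ are f-homoclinic and τ(x) = τ(y), then x = y. (Assume the Walters theorem that τ is affine: τ(x̄) = (Bx + c) + ℤⁿ for some B ∈ Mₙ(ℤ), c ∈ ℝⁿ.) -/
open Filter Topology

def homoclinic {X : Type*} [MetricSpace X] (f : X ≃ₜ X) (x y : X) : Prop :=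
  Filter.Tendsto (fun k : ℤ => dist ((f.toEquiv ^ k) x) ((f.toEquiv ^ k) y))
    Filter.cofinite (nhds 0)

abbrev Torus (n : ℕ) : Type := Fin n → AddCircle (1 : ℝ)

noncomputable def torusProj (n : ℕ) (x : Fin n → ℝ) : Torus n :=
  fun i => (x i : AddCircle (1 : ℝ))

namespace Stmt14Aux

variable {n : ℕ}

lemma castM_mul (P Q : Matrix (Fin n) (Fin n) ℤ) :
    (P * Q).map (Int.cast : ℤ → ℝ) = P.map Int.cast * Q.map Int.cast :=
  Matrix.map_mul (f := Int.castRingHom ℝ)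

lemma castM_mulVec_cast (P : Matrix (Fin n) (Fin n) ℤ) (v : Fin n → ℤ) (i : Fin n) :
    (P.map (Int.cast : ℤ → ℝ)).mulVec (fun j => (v j : ℝ)) i = ((P.mulVec v i : ℤ) : ℝ) :=
  ((Int.castRingHom ℝ).map_mulVec P v i).symm

/-- Iteration formula for integer powers. -/
lemma iter_formula (A : Matrix (Fin n) (Fin n) ℤ) (hA : IsUnit A.det)
    (f : Torus n ≃ₜ Torus n)
    (hf : ∀ x : Fin n → ℝ,
      f (torusProj n x) = torusProj n ((A.map (Int.cast : ℤ → ℝ)).mulVec x)) :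
    ∀ (k : ℤ) (x : Fin n → ℝ),
      (f.toEquiv ^ k) (torusProj n x)
        = torusProj n ((((((Matrix.isUnit_iff_isUnit_det A).mpr hA).unit ^ k
            : (Matrix (Fin n) (Fin n) ℤ)ˣ) : Matrix (Fin n) (Fin n) ℤ).map
            (Int.cast : ℤ → ℝ)).mulVec x) := by
  set U := ((Matrix.isUnit_iff_isUnit_det A).mpr hA).unit with hU
  have hUval : (U : Matrix (Fin n) (Fin n) ℤ) = A := IsUnit.unit_spec _
  have hsymm : ∀ x : Fin n → ℝ, f.symm (torusProj n x)
      = torusProj n ((((U⁻¹ : (Matrix (Fin n) (Fin n) ℤ)ˣ) : Matrix (Fin n) (Fin n) ℤ).map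
          (Int.cast : ℤ → ℝ)).mulVec x) := by
    intro x
    have hfx : f (torusProj n ((((U⁻¹ : (Matrix (Fin n) (Fin n) ℤ)ˣ)
        : Matrix (Fin n) (Fin n) ℤ).map (Int.cast : ℤ → ℝ)).mulVec x)) = torusProj n x := by
      rw [hf, Matrix.mulVec_mulVec, ← hUval, ← castM_mul, Units.mul_inv]
      simp [torusProj, Matrix.one_mulVec]
    calc f.symm (torusProj n x)
        = f.symm (f (torusProj n ((((U⁻¹ : (Matrix (Fin n) (Fin n) ℤ)ˣ)
            : Matrix (Fin n) (Fin n) ℤ).map (Int.cast : ℤ → ℝ)).mulVec x))) := by rw [hfx]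
      _ = _ := f.symm_apply_apply _
  intro k
  induction k using Int.induction_on with
  | zero => intro x; simp [torusProj, Matrix.one_mulVec]
  | succ k ih =>
      intro x
      have h1 : (f.toEquiv ^ ((k : ℤ) + 1)) (torusProj n x)
          = (f.toEquiv ^ (k : ℤ)) (f.toEquiv (torusProj n x)) := by
        rw [zpow_add_one, Equiv.Perm.mul_apply]
      rw [h1]
      have : f.toEquiv (torusProj n x) = f (torusProj n x) := rfl
      rw [this, hf, ih, Matrix.mulVec_mulVec, ← castM_mul]
      have hcoe : ((U ^ ((k:ℤ)+1) : (Matrix (Fin n) (Fin n) ℤ)ˣ) : Matrix (Fin n) (Fin n) ℤ)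
          = ((U ^ (k:ℤ) : (Matrix (Fin n) (Fin n) ℤ)ˣ) : Matrix (Fin n) (Fin n) ℤ) * A := by
        rw [zpow_add_one, Units.val_mul, hUval]
      rw [hcoe]
  | pred k ih =>
      intro x
      have h1 : (f.toEquiv ^ (-(k : ℤ) - 1)) (torusProj n x)
          = (f.toEquiv ^ (-(k : ℤ))) ((f.toEquiv)⁻¹ (torusProj n x)) := by
        rw [zpow_sub_one, Equiv.Perm.mul_apply]
      rw [h1]
      have : (f.toEquiv)⁻¹ (torusProj n x) = f.symm (torusProj n x) := rfl
      rw [this, hsymm, ih, Matrix.mulVec_mulVec, ← castM_mul]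
      have hcoe : ((U ^ (-(k:ℤ)-1) : (Matrix (Fin n) (Fin n) ℤ)ˣ) : Matrix (Fin n) (Fin n) ℤ)
          = ((U ^ (-(k:ℤ)) : (Matrix (Fin n) (Fin n) ℤ)ˣ) : Matrix (Fin n) (Fin n) ℤ)
            * ((U⁻¹ : (Matrix (Fin n) (Fin n) ℤ)ˣ) : Matrix (Fin n) (Fin n) ℤ) := by
        rw [zpow_sub_one, Units.val_mul]
      rw [hcoe]

/-- Surjectivity of the affine map forces `det B ≠ 0`. -/
lemma det_ne_zero (B : Matrix (Fin n) (Fin n) ℤ) (c : Fin n → ℝ)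
    (τ : Torus n → Torus n)
    (hwalters : ∀ x : Fin n → ℝ,
      τ (torusProj n x) = torusProj n ((B.map (Int.cast : ℤ → ℝ)).mulVec x + c))
    (hsurj : Function.Surjective τ) : B.det ≠ 0 := by
  intro hdet
  obtain ⟨u, hu0, huB⟩ := Matrix.exists_vecMul_eq_zero_iff.mpr hdet
  obtain ⟨j, hj'⟩ := Function.ne_iff.mp hu0
  have hj : u j ≠ 0 := by simpa using hj'
  -- key claim
  have key : ∀ w : Fin n → ℝ, ∃ m : ℤ,
      ∑ i, (u i : ℝ) * w i = ∑ i, (u i : ℝ) * c i + (m : ℝ) := by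
    intro w
    obtain ⟨z, hz⟩ := hsurj (torusProj n w)
    set xz : Fin n → ℝ := fun i => (z i).out with hxzdef
    have hxz : torusProj n xz = z := funext fun i => QuotientAddGroup.out_eq' (z i)
    have heq : torusProj n ((B.map (Int.cast : ℤ → ℝ)).mulVec xz + c) = torusProj n w := by
      rw [← hwalters, hxz, hz]
    have hcomp : ∀ i : Fin n, ∃ m : ℤ,
        (m : ℝ) = w i - ((B.map (Int.cast : ℤ → ℝ)).mulVec xz + c) i := by
      intro i
      have := congrFun heq i
      have h0 : ((w i - ((B.map (Int.cast : ℤ → ℝ)).mulVec xz + c) i : ℝ)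
          : AddCircle (1:ℝ)) = 0 := by
        rw [QuotientAddGroup.mk_sub, sub_eq_zero]
        exact (this).symm
      rw [AddCircle.coe_eq_zero_iff] at h0
      obtain ⟨m, hm⟩ := h0
      exact ⟨m, by simpa using hm⟩
    choose m hm using hcomp
    refine ⟨∑ i, u i * m i, ?_⟩
    have hBpart : ∑ i, (u i : ℝ) * ((B.map (Int.cast : ℤ → ℝ)).mulVec xz) i = 0 := by
      have h1 : dotProduct (fun i => (u i : ℝ)) ((B.map (Int.cast : ℤ → ℝ)).mulVec xz)
          = dotProduct
            (Matrix.vecMul (fun i => (u i : ℝ)) (B.map (Int.cast : ℤ → ℝ))) xz :=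
        Matrix.dotProduct_mulVec _ _ _
      have h2 : (Matrix.vecMul (fun i => (u i : ℝ)) (B.map (Int.cast : ℤ → ℝ))) = 0 := by
        funext i
        have := (Int.castRingHom ℝ).map_vecMul B u i
        simp only [huB] at this
        simpa [Function.comp_def] using this.symm
      simpa [dotProduct, h2] using h1
    have hstep : ∑ i, (u i : ℝ) * w i
        = ∑ i, ((u i : ℝ) * ((B.map (Int.cast : ℤ → ℝ)).mulVec xz) i
            + ((u i : ℝ) * c i + (u i : ℝ) * (m i : ℝ))) := by
      apply Finset.sum_congr rfl
      intro i _
      have h3 : w i = ((B.map (Int.cast : ℤ → ℝ)).mulVec xz) i + c i + (m i : ℝ) := by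
        have := hm i
        simp only [Pi.add_apply] at this
        linarith
      rw [h3]; ring
    rw [hstep, Finset.sum_add_distrib, Finset.sum_add_distrib, hBpart, zero_add]
    push_cast
    rfl
  obtain ⟨m1, hm1⟩ := key 0
  obtain ⟨m2, hm2⟩ := key (fun i => if i = j then 1 / (2 * (u j : ℝ)) else 0)
  have hujR : (u j : ℝ) ≠ 0 := Int.cast_ne_zero.mpr hj
  have hsum2 : ∑ i, (u i : ℝ) * (if i = j then 1 / (2 * (u j : ℝ)) else 0) = 1/2 := by
    rw [Finset.sum_eq_single j]
    · field_simp
      exact mul_one_div_cancel (mul_ne_zero hujR two_ne_zero)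
    · intro b _ hb; simp [hb]
    · intro h; exact absurd (Finset.mem_univ j) h
  rw [hsum2] at hm2
  simp only [Pi.zero_apply, mul_zero, Finset.sum_const_zero] at hm1
  -- 0 = S + m1, 1/2 = S + m2 → 1/2 = m2 - m1, contradiction
  have : (1/2 : ℝ) = ((m2 - m1 : ℤ) : ℝ) := by push_cast; linarith
  have h2 : ((2 * (m2 - m1) : ℤ) : ℝ) = 1 := by push_cast; linarith
  have := Int.cast_injective (α := ℝ) (h2.trans (by norm_num : (1:ℝ) = ((1:ℤ):ℝ)))
  omega

/-- If ‖(t/d : AddCircle 1)‖ < 1/|d| then t/d is an integer. -/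
lemma rational_small_norm (d t : ℤ) (hd : d ≠ 0)
    (h : ‖(((t : ℝ) / (d : ℝ)) : AddCircle (1:ℝ))‖ < 1 / |(d : ℝ)|) :
    ∃ m : ℤ, ((t : ℝ) / (d : ℝ)) = (m : ℝ) := by
  have hdR : (d : ℝ) ≠ 0 := Int.cast_ne_zero.mpr hd
  have habs : |(d : ℝ)| > 0 := abs_pos.mpr hdR
  rw [show ‖(((t : ℝ) / (d : ℝ)) : AddCircle (1:ℝ))‖
      = |(t : ℝ) / (d : ℝ) - round ((t : ℝ) / (d : ℝ))| by rw [AddCircle.norm_eq]; simp] at h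
  set r := round ((t : ℝ) / (d : ℝ)) with hr
  have key : |(t : ℝ) - (r : ℝ) * (d : ℝ)| < 1 := by
    have : |(t : ℝ) / (d : ℝ) - (r : ℝ)| * |(d : ℝ)| < (1 / |(d : ℝ)|) * |(d : ℝ)| :=
      mul_lt_mul_of_pos_right h habs
    rw [← abs_mul, sub_mul, div_mul_cancel₀ _ hdR, one_div,
      inv_mul_cancel₀ (ne_of_gt habs)] at this
    exact this
  have : ((|t - r * d| : ℤ) : ℝ) < 1 := by push_cast; exact key
  have hlt : |t - r * d| < 1 := by exact_mod_cast this
  have h' := abs_lt.mp hlt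
  have : t = r * d := by omega
  exact ⟨r, by rw [this]; push_cast; field_simp⟩

end Stmt14Aux

open Stmt14Aux in
theorem stmt14 {n : ℕ} (A : Matrix (Fin n) (Fin n) ℤ) (hA : IsUnit A.det)
    (hhyp : ∀ z : ℂ, (A.map (Int.cast : ℤ → ℂ)).charpoly.IsRoot z → ‖z‖ ≠ 1)
    (f : Torus n ≃ₜ Torus n)
    (hf : ∀ x : Fin n → ℝ,
      f (torusProj n x) = torusProj n ((A.map (Int.cast : ℤ → ℝ)).mulVec x))
    (τ : Torus n → Torus n) (hτc : Continuous τ) (hcomm : ∀ p, τ (f p) = f (τ p))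
    (hsurj : Function.Surjective τ)
    (B : Matrix (Fin n) (Fin n) ℤ) (c : Fin n → ℝ)
    (hwalters : ∀ x : Fin n → ℝ,
      τ (torusProj n x) = torusProj n ((B.map (Int.cast : ℤ → ℝ)).mulVec x + c)) :
    ∀ p q : Torus n, homoclinic f p q → τ p = τ q → p = q := by
  intro p q hpq hτpq
  -- lifts
  set x : Fin n → ℝ := fun i => (p i).out with hxdef
  set y : Fin n → ℝ := fun i => (q i).out with hydef
  have hx : torusProj n x = p := funext fun i => QuotientAddGroup.out_eq' (p i)
  have hy : torusProj n y = q := funext fun i => QuotientAddGroup.out_eq' (q i)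
  set v : Fin n → ℝ := x - y with hvdef
  set d : ℤ := B.det with hddef
  have hd : d ≠ 0 := det_ne_zero B c τ hwalters hsurj
  -- B v is an integer vector
  have hBv : ∀ i, ∃ m : ℤ, (m : ℝ) = ((B.map (Int.cast : ℤ → ℝ)).mulVec v) i := by
    intro i
    have heq : torusProj n ((B.map (Int.cast : ℤ → ℝ)).mulVec x + c)
        = torusProj n ((B.map (Int.cast : ℤ → ℝ)).mulVec y + c) := by
      rw [← hwalters, ← hwalters, hx, hy, hτpq]
    have := congrFun heq i
    have h0 : ((((B.map (Int.cast : ℤ → ℝ)).mulVec x + c) i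
        - ((B.map (Int.cast : ℤ → ℝ)).mulVec y + c) i : ℝ) : AddCircle (1:ℝ)) = 0 := by
      rw [QuotientAddGroup.mk_sub, sub_eq_zero]; exact this
    rw [AddCircle.coe_eq_zero_iff] at h0
    obtain ⟨m, hm⟩ := h0
    refine ⟨m, ?_⟩
    have hvsub : (B.map (Int.cast : ℤ → ℝ)).mulVec v
        = (B.map (Int.cast : ℤ → ℝ)).mulVec x - (B.map (Int.cast : ℤ → ℝ)).mulVec y := by
      rw [hvdef, Matrix.mulVec_sub]
    have hsub : ((B.map (Int.cast : ℤ → ℝ)).mulVec x + c) i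
        - ((B.map (Int.cast : ℤ → ℝ)).mulVec y + c) i
        = ((B.map (Int.cast : ℤ → ℝ)).mulVec v) i := by
      rw [hvsub, Pi.sub_apply]
      simp
    rw [← hsub]
    simpa using hm
  choose mB hmB using hBv
  -- w = adjugate B * mB satisfies d • v = w
  set w : Fin n → ℤ := B.adjugate.mulVec mB with hwdef
  have hdv : ∀ i, (d : ℝ) * v i = (w i : ℝ) := by
    intro i
    have h1 : (fun j => (mB j : ℝ)) = (B.map (Int.cast : ℤ → ℝ)).mulVec v :=
      funext fun j => hmB j
    have h2 : (w i : ℝ)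
        = ((B.adjugate.map (Int.cast : ℤ → ℝ)).mulVec (fun j => (mB j : ℝ))) i :=
      (castM_mulVec_cast B.adjugate mB i).symm
    rw [h2, h1, Matrix.mulVec_mulVec, ← castM_mul, Matrix.adjugate_mul]
    have h3 : ((B.det • (1 : Matrix (Fin n) (Fin n) ℤ)).map (Int.cast : ℤ → ℝ))
        = (d : ℝ) • (1 : Matrix (Fin n) (Fin n) ℝ) := by
      ext a b
      simp only [Matrix.map_apply, Matrix.smul_apply, Matrix.one_apply, smul_eq_mul, hddef]
      rw [mul_ite, mul_one, mul_zero]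
      push_cast
      rw [mul_ite, mul_one, mul_zero]
    rw [h3, Matrix.smul_mulVec, Matrix.one_mulVec]
    rfl
  -- iteration
  set U := ((Matrix.isUnit_iff_isUnit_det A).mpr hA).unit with hUdef
  have hiter := iter_formula A hA f hf
  -- extract a time k with small distance
  have hεpos : (0:ℝ) < 1 / |(d:ℝ)| := by
    apply div_pos one_pos
    exact abs_pos.mpr (Int.cast_ne_zero.mpr hd)
  have hev : ∀ᶠ k : ℤ in Filter.cofinite,
      dist ((f.toEquiv ^ k) p) ((f.toEquiv ^ k) q) < 1 / |(d:ℝ)| := by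
    have := Metric.tendsto_nhds.mp hpq (1 / |(d:ℝ)|) hεpos
    filter_upwards [this] with k hk
    rw [Real.dist_eq, sub_zero, abs_of_nonneg dist_nonneg] at hk
    exact hk
  obtain ⟨k, hk⟩ := hev.exists
  -- at time k, each coordinate of A^k v is close to an integer
  set Mk : Matrix (Fin n) (Fin n) ℤ :=
    ((U ^ k : (Matrix (Fin n) (Fin n) ℤ)ˣ) : Matrix (Fin n) (Fin n) ℤ) with hMkdef
  set t : Fin n → ℤ := Mk.mulVec w with htdef
  have hMv : ∀ i, (Mk.map (Int.cast : ℤ → ℝ)).mulVec v i = (t i : ℝ) / (d : ℝ) := by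
    intro i
    have hdR : (d : ℝ) ≠ 0 := Int.cast_ne_zero.mpr hd
    rw [eq_div_iff hdR]
    have h1 : (Mk.map (Int.cast : ℤ → ℝ)).mulVec v i * (d:ℝ)
        = ((Mk.map (Int.cast : ℤ → ℝ)).mulVec ((d:ℝ) • v)) i := by
      rw [Matrix.mulVec_smul]
      simp [mul_comm]
    rw [h1]
    have h2 : ((d:ℝ) • v) = fun j => (w j : ℝ) := by
      funext j
      simp only [Pi.smul_apply, smul_eq_mul]
      exact hdv j
    rw [h2, castM_mulVec_cast]
  have hcoord : ∀ i, ∃ m : ℤ, (Mk.map (Int.cast : ℤ → ℝ)).mulVec v i = (m : ℝ) := by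
    intro i
    have hpk := hiter k x
    have hqk := hiter k y
    rw [hx] at hpk
    rw [hy] at hqk
    have hle : dist (((f.toEquiv ^ k) p) i) (((f.toEquiv ^ k) q) i)
        ≤ dist ((f.toEquiv ^ k) p) ((f.toEquiv ^ k) q) := dist_le_pi_dist _ _ i
    have hlt : dist (((f.toEquiv ^ k) p) i) (((f.toEquiv ^ k) q) i) < 1 / |(d:ℝ)| :=
      lt_of_le_of_lt hle hk
    rw [hpk, hqk] at hlt
    have hdist : dist ((torusProj n ((Mk.map (Int.cast : ℤ → ℝ)).mulVec x)) i)
        ((torusProj n ((Mk.map (Int.cast : ℤ → ℝ)).mulVec y)) i)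
        = ‖((((Mk.map (Int.cast : ℤ → ℝ)).mulVec v) i : ℝ) : AddCircle (1:ℝ))‖ := by
      show dist (((Mk.map (Int.cast : ℤ → ℝ)).mulVec x i : ℝ) : AddCircle (1:ℝ))
        (((Mk.map (Int.cast : ℤ → ℝ)).mulVec y i : ℝ) : AddCircle (1:ℝ)) = _
      rw [dist_eq_norm, ← QuotientAddGroup.mk_sub]
      congr 1
      have hvsub : (Mk.map (Int.cast : ℤ → ℝ)).mulVec v
          = (Mk.map (Int.cast : ℤ → ℝ)).mulVec x - (Mk.map (Int.cast : ℤ → ℝ)).mulVec y := by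
        rw [hvdef, Matrix.mulVec_sub]
      rw [hvsub, Pi.sub_apply]
    rw [hdist, hMv i] at hlt
    obtain ⟨m, hm⟩ := rational_small_norm d (t i) hd hlt
    exact ⟨m, by rw [hMv i, hm]⟩
  choose mv hmv using hcoord
  -- invert to see v is an integer vector
  have hvint : ∀ i, ∃ m : ℤ, v i = (m : ℝ) := by
    intro i
    set Mk' : Matrix (Fin n) (Fin n) ℤ :=
      ((U ^ (-k) : (Matrix (Fin n) (Fin n) ℤ)ˣ) : Matrix (Fin n) (Fin n) ℤ) with hMk'def
    have hinv : Mk' * Mk = 1 := by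
      rw [hMk'def, hMkdef, ← Units.val_mul, zpow_neg, inv_mul_cancel]
      rfl
    have h1 : v = (Mk'.map (Int.cast : ℤ → ℝ)).mulVec
        ((Mk.map (Int.cast : ℤ → ℝ)).mulVec v) := by
      rw [Matrix.mulVec_mulVec, ← castM_mul, hinv]
      simp [Matrix.one_mulVec]
    have h2 : ((Mk.map (Int.cast : ℤ → ℝ)).mulVec v) = fun j => (mv j : ℝ) :=
      funext fun j => hmv j
    refine ⟨Mk'.mulVec mv i, ?_⟩
    rw [h1, h2]
    exact castM_mulVec_cast Mk' mv i
  -- conclude p = q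
  funext i
  obtain ⟨m, hm⟩ := hvint i
  have : p i - q i = ((v i : ℝ) : AddCircle (1:ℝ)) := by
    rw [← hx, ← hy]
    show (x i : AddCircle (1:ℝ)) - (y i : AddCircle (1:ℝ)) = _
    rw [← QuotientAddGroup.mk_sub]
    rfl
  have hz : p i - q i = 0 := by
    rw [this, hm, AddCircle.coe_eq_zero_iff]
    exact ⟨m, by simp⟩
  exact sub_eq_zero.mp hz
end

section
/- The polynomial x⁴ − 2x³ + x² − 2x + 1 is irreducible over ℚ, and none of its complex roots is a root of unity; moreover it has exactly two roots of modulus 1 and two positive real roots λ₃, λ₄ with 0 < λ₃ < 1 < λ₄. -/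
open Polynomial

lemma mq {K : Type*} [CommRing K] {q : K[X]} (hq : q.Monic) (h2 : q.natDegree = 2) :
    q = X ^ 2 + C (q.coeff 1) * X + C (q.coeff 0) := by
  ext n
  rcases n with _|_|_|n
  · simp
  · simp
  · simpa using (by simpa [h2] using hq.coeff_natDegree : q.coeff 2 = 1)
  · rw [coeff_eq_zero_of_natDegree_lt (by omega)]
    simp [coeff_X, coeff_C, coeff_X_pow]

lemma no_quad (a b c d : ZMod 3) :
    (X^4+X^3+X^2+X+1 : (ZMod 3)[X]) ≠ (X^2 + C a * X + C b) * (X^2 + C c * X + C d) := by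
  intro hr
  have e0 := congrArg (eval 0) hr
  have e1 := congrArg (eval 1) hr
  have e2 := congrArg (eval 2) hr
  simp only [eval_mul, eval_add, eval_pow, eval_X, eval_C, eval_one] at e0 e1 e2
  norm_num at e0 e1 e2
  clear hr
  revert a b c d e0 e1 e2
  decide

lemma irr_zmod3 : Irreducible (X^4+X^3+X^2+X+1 : (ZMod 3)[X]) := by
  have hmon : (X^4+X^3+X^2+X+1 : (ZMod 3)[X]).Monic := by
    monicity!
  have hnd : (X^4+X^3+X^2+X+1 : (ZMod 3)[X]).natDegree = 4 := by compute_degree!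
  rw [hmon.irreducible_iff_lt_natDegree_lt]
  · intro q hq hdq hdvd
    rw [hnd] at hdq
    simp only [Finset.mem_Ioc] at hdq
    obtain ⟨hd1, hd2⟩ := hdq
    obtain ⟨r, hr⟩ := hdvd
    have hrm : r.Monic := hq.of_mul_monic_left (hr ▸ hmon)
    interval_cases hqd : q.natDegree
    · -- degree 1
      rw [hq.eq_X_add_C hqd] at hr
      have : ((-q.coeff 0)^4 + (-q.coeff 0)^3 + (-q.coeff 0)^2 + (-q.coeff 0) + 1 : ZMod 3) = 0 := by
        have := congrArg (eval (-q.coeff 0)) hr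
        simpa using this
      revert this
      generalize (-q.coeff 0 : ZMod 3) = x
      revert x; decide
    · -- degree 2
      have hrd : r.natDegree = 2 := by
        have h4 := congrArg natDegree hr
        rw [natDegree_mul hq.ne_zero hrm.ne_zero, hnd, hqd] at h4
        omega
      rw [mq hq hqd, mq hrm hrd] at hr
      exact no_quad _ _ _ _ hr
  · intro h
    have := congrArg natDegree h
    rw [hnd, natDegree_one] at this
    exact absurd this (by norm_num)
lemma monZ : (X ^ 4 - 2 * X ^ 3 + X ^ 2 - 2 * X + 1 : ℤ[X]).Monic := by monicity!

lemma irrZ : Irreducible (X ^ 4 - 2 * X ^ 3 + X ^ 2 - 2 * X + 1 : ℤ[X]) := by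
  apply monZ.irreducible_of_irreducible_map (Int.castRingHom (ZMod 3))
  have hmap : (X ^ 4 - 2 * X ^ 3 + X ^ 2 - 2 * X + 1 : ℤ[X]).map (Int.castRingHom (ZMod 3))
      = X^4+X^3+X^2+X+1 := by
    have h3 : (3 : (ZMod 3)[X]) = 0 := by
      have : ((3:ℕ) : (ZMod 3)[X]) = 0 := CharP.cast_eq_zero _ 3
      norm_num at this
      exact this
    simp only [Polynomial.map_add, Polynomial.map_sub, Polynomial.map_mul, Polynomial.map_pow,
      Polynomial.map_one, Polynomial.map_X, Polynomial.map_ofNat]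
    linear_combination (-(X^3 + X) : (ZMod 3)[X]) * h3
  rw [hmap]
  exact irr_zmod3

lemma irrQ : Irreducible (X ^ 4 - 2 * X ^ 3 + X ^ 2 - 2 * X + 1 : ℚ[X]) := by
  have h := (IsPrimitive.Int.irreducible_iff_irreducible_map_cast monZ.isPrimitive).mp irrZ
  rwa [Polynomial.map_add, Polynomial.map_sub, Polynomial.map_add, Polynomial.map_sub,
    Polynomial.map_mul, Polynomial.map_mul, Polynomial.map_pow, Polynomial.map_pow,
    Polynomial.map_pow, Polynomial.map_one, Polynomial.map_X, Polynomial.map_ofNat] at h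

lemma part4 : ∃ l₃ l₄ : ℝ, (X ^ 4 - 2 * X ^ 3 + X ^ 2 - 2 * X + 1 : ℝ[X]).IsRoot l₃ ∧
      (X ^ 4 - 2 * X ^ 3 + X ^ 2 - 2 * X + 1 : ℝ[X]).IsRoot l₄ ∧
      0 < l₃ ∧ l₃ < 1 ∧ 1 < l₄ := by
  set f : ℝ → ℝ := fun x => x^4 - 2*x^3 + x^2 - 2*x + 1 with hf
  have hcont : Continuous f := by fun_prop
  have h0 : f 0 = 1 := by norm_num [hf]
  have h1 : f 1 = -1 := by norm_num [hf]
  have h2 : f 2 = 1 := by norm_num [hf]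
  have m3 : (0:ℝ) ∈ Set.Ioo (f 1) (f 0) := by rw [h0, h1]; constructor <;> norm_num
  obtain ⟨l₃, hl₃m, hl₃⟩ := intermediate_value_Ioo' (by norm_num : (0:ℝ) ≤ 1) hcont.continuousOn m3
  have m4 : (0:ℝ) ∈ Set.Ioo (f 1) (f 2) := by rw [h1, h2]; constructor <;> norm_num
  obtain ⟨l₄, hl₄m, hl₄⟩ := intermediate_value_Ioo (by norm_num : (1:ℝ) ≤ 2) hcont.continuousOn m4
  refine ⟨l₃, l₄, ?_, ?_, hl₃m.1, hl₃m.2, hl₄m.1⟩ <;>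
    simp only [IsRoot, eval_add, eval_sub, eval_mul, eval_pow, eval_X, eval_one, eval_ofNat]
  · exact hl₃
  · exact hl₄

lemma part2' {l₄ : ℝ} (hl : (X ^ 4 - 2 * X ^ 3 + X ^ 2 - 2 * X + 1 : ℝ[X]).IsRoot l₄)
    (hl1 : 1 < l₄) (z : ℂ) (hz : (X ^ 4 - 2 * X ^ 3 + X ^ 2 - 2 * X + 1 : ℂ[X]).IsRoot z)
    (k : ℕ) (hk : 1 ≤ k) : z ^ k ≠ 1 := by
  intro hzk
  have haev : aeval z (X ^ 4 - 2 * X ^ 3 + X ^ 2 - 2 * X + 1 : ℚ[X]) = 0 := by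
    simpa [aeval_def, eval₂_eq_eval_map, Polynomial.map_add, Polynomial.map_sub,
      Polynomial.map_mul, Polynomial.map_pow, Polynomial.map_one, Polynomial.map_X,
      Polynomial.map_ofNat] using hz
  have hmonic : (X ^ 4 - 2 * X ^ 3 + X ^ 2 - 2 * X + 1 : ℚ[X]).Monic := by monicity!
  have hmin : minpoly ℚ z = X ^ 4 - 2 * X ^ 3 + X ^ 2 - 2 * X + 1 :=
    (minpoly.eq_of_irreducible_of_monic irrQ haev hmonic).symm
  have hdvd : (X ^ 4 - 2 * X ^ 3 + X ^ 2 - 2 * X + 1 : ℚ[X]) ∣ X ^ k - 1 := by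
    rw [← hmin]
    apply minpoly.dvd
    simp [hzk]
  obtain ⟨g, hg⟩ := hdvd
  have := congrArg (fun p => Polynomial.eval l₄ (Polynomial.map (algebraMap ℚ ℝ) p)) hg
  simp only [Polynomial.map_mul, Polynomial.map_sub, Polynomial.map_add, Polynomial.map_pow,
    Polynomial.map_one, Polynomial.map_X, Polynomial.map_ofNat, eval_mul, eval_sub, eval_add,
    eval_pow, eval_one, eval_X, eval_ofNat] at this
  have hzero : l₄ ^ 4 - 2 * l₄ ^ 3 + l₄ ^ 2 - 2 * l₄ + 1 = 0 := by
    simpa [IsRoot] using hl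
  rw [hzero, zero_mul, sub_eq_zero] at this
  have hlt : (1:ℝ) < l₄ ^ k := one_lt_pow₀ hl1 (by omega)
  linarith
lemma part3 : {z : ℂ | (X ^ 4 - 2 * X ^ 3 + X ^ 2 - 2 * X + 1 : ℂ[X]).IsRoot z ∧
      ‖z‖ = 1}.ncard = 2 := by
  set s : ℝ := Real.sqrt 2 with hs_def
  set t : ℝ := Real.sqrt (1 + 2*s) with ht_def
  set u : ℝ := Real.sqrt (2*s - 1) with hu_def
  have hs0 : 0 ≤ s := Real.sqrt_nonneg _
  have hs : s^2 = 2 := Real.sq_sqrt (by norm_num)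
  have hs1 : 1 < s := by nlinarith
  have ht0 : 0 < t := Real.sqrt_pos.mpr (by nlinarith)
  have ht : t^2 = 1 + 2*s := Real.sq_sqrt (by nlinarith)
  have hu0 : 0 ≤ u := Real.sqrt_nonneg _
  have hu : u^2 = 2*s - 1 := Real.sq_sqrt (by nlinarith)
  have hu1 : u < 1 + s := by nlinarith
  have hus : s - 1 < u := by nlinarith
  have hsC : (s:ℂ)^2 = 2 := by exact_mod_cast congrArg (fun x : ℝ => (x:ℂ)) hs
  have htC : (t:ℂ)^2 = 1 + 2*s := by exact_mod_cast congrArg (fun x : ℝ => (x:ℂ)) ht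
  have huC : (u:ℂ)^2 = 2*s - 1 := by exact_mod_cast congrArg (fun x : ℝ => (x:ℂ)) hu
  set z₁ : ℂ := (((1-s)/2 : ℝ) : ℂ) + ((t/2 : ℝ) : ℂ) * Complex.I with hz₁
  set z₂ : ℂ := (((1-s)/2 : ℝ) : ℂ) - ((t/2 : ℝ) : ℂ) * Complex.I with hz₂
  set r₁ : ℂ := (((1+s+u)/2 : ℝ) : ℂ) with hr₁
  set r₂ : ℂ := (((1+s-u)/2 : ℝ) : ℂ) with hr₂
  have hI := Complex.I_sq
  have hA : ∀ z : ℂ, (z - z₁)*(z - z₂) = z^2 - (1-(s:ℂ))*z + 1 := by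
    intro z
    rw [hz₁, hz₂]; push_cast
    linear_combination (-((t:ℂ)^2)/4) * hI + (1/4)*htC + (1/4)*hsC
  have hB : ∀ z : ℂ, (z - r₁)*(z - r₂) = z^2 - (1+(s:ℂ))*z + 1 := by
    intro z
    rw [hr₁, hr₂]; push_cast
    linear_combination (1/4)*hsC - (1/4)*huC
  have factor : ∀ z : ℂ, z^4 - 2*z^3 + z^2 - 2*z + 1 = (z - z₁)*(z - z₂)*((z - r₁)*(z - r₂)) := by
    intro z
    rw [hA, hB]
    linear_combination (z^2)*hsC
  have heval : ∀ z : ℂ, (X ^ 4 - 2 * X ^ 3 + X ^ 2 - 2 * X + 1 : ℂ[X]).IsRoot z ↔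
      z^4 - 2*z^3 + z^2 - 2*z + 1 = 0 := by
    intro z
    simp [IsRoot, eval_add, eval_sub, eval_mul, eval_pow]
  have habs1 : ‖z₁‖ = 1 := by
    rw [hz₁, Complex.norm_add_mul_I]
    rw [show ((1-s)/2)^2 + (t/2)^2 = 1 by nlinarith]
    exact Real.sqrt_one
  have habs2 : ‖z₂‖ = 1 := by
    have : z₂ = (((1-s)/2 : ℝ) : ℂ) + ((-(t/2) : ℝ) : ℂ) * Complex.I := by
      rw [hz₂]; push_cast; ring
    rw [this, Complex.norm_add_mul_I]
    rw [show ((1-s)/2)^2 + (-(t/2))^2 = 1 by nlinarith]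
    exact Real.sqrt_one
  have hne : z₁ ≠ z₂ := by
    rw [hz₁, hz₂]
    intro h
    have him := congrArg Complex.im h
    simp only [Complex.add_im, Complex.sub_im, Complex.ofReal_im, Complex.mul_im,
      Complex.I_im, Complex.I_re, Complex.ofReal_re, mul_one, mul_zero, add_zero,
      zero_add, zero_sub] at him
    linarith
  have hset : {z : ℂ | (X ^ 4 - 2 * X ^ 3 + X ^ 2 - 2 * X + 1 : ℂ[X]).IsRoot z ∧
      ‖z‖ = 1} = {z₁, z₂} := by
    ext z
    simp only [Set.mem_setOf_eq, Set.mem_insert_iff, Set.mem_singleton_iff, heval]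
    constructor
    · rintro ⟨h0, habs⟩
      rw [factor z] at h0
      rcases mul_eq_zero.mp h0 with h | h
      · rcases mul_eq_zero.mp h with h | h
        · left; exact sub_eq_zero.mp h
        · right; exact sub_eq_zero.mp h
      · exfalso
        rcases mul_eq_zero.mp h with h | h
        · have hz : z = r₁ := sub_eq_zero.mp h
          rw [hz, hr₁, Complex.norm_real, Real.norm_eq_abs, abs_of_pos (by nlinarith)] at habs
          nlinarith
        · have hz : z = r₂ := sub_eq_zero.mp h
          rw [hz, hr₂, Complex.norm_real, Real.norm_eq_abs, abs_of_pos (by nlinarith)] at habs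
          nlinarith
    · rintro (rfl | rfl)
      · exact ⟨by rw [factor]; ring, habs1⟩
      · exact ⟨by rw [factor]; ring, habs2⟩
  rw [hset]
  exact Set.ncard_pair hne

theorem stmt17 :
    Irreducible (X ^ 4 - 2 * X ^ 3 + X ^ 2 - 2 * X + 1 : ℚ[X]) ∧
    (∀ z : ℂ, (X ^ 4 - 2 * X ^ 3 + X ^ 2 - 2 * X + 1 : ℂ[X]).IsRoot z →
      ∀ k : ℕ, 1 ≤ k → z ^ k ≠ 1) ∧
    {z : ℂ | (X ^ 4 - 2 * X ^ 3 + X ^ 2 - 2 * X + 1 : ℂ[X]).IsRoot z ∧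
      ‖z‖ = 1}.ncard = 2 ∧
    (∃ l₃ l₄ : ℝ, (X ^ 4 - 2 * X ^ 3 + X ^ 2 - 2 * X + 1 : ℝ[X]).IsRoot l₃ ∧
      (X ^ 4 - 2 * X ^ 3 + X ^ 2 - 2 * X + 1 : ℝ[X]).IsRoot l₄ ∧
      0 < l₃ ∧ l₃ < 1 ∧ 1 < l₄) := by
  obtain ⟨l₃, l₄, h3, h4, hp, hl1, hl2⟩ := part4
  exact ⟨irrQ, fun z hz k hk => part2' h4 hl2 z hz k hk, part3,
    ⟨l₃, l₄, h3, h4, hp, hl1, hl2⟩⟩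
end

section
/- Let A ∈ GLₙ(ℤ) be such that the homoclinicity group Δ(f_A) of the induced toral automorphism f_A is trivial (Δ(f_A) = {0}). Then every map τ : Tⁿ → Tⁿ is automatically pre-injective with respect to f_A; in particular, the constant map 0 is pre-injective but not surjective (for n ≥ 1), so (Tⁿ, f_A) does not have the Myhill property. -/
open Filter Topology

theorem stmt18 {n : ℕ} (A : Matrix (Fin n) (Fin n) ℤ) (hA : IsUnit A.det)
    (f : Torus n ≃ₜ Torus n)
    (hf : ∀ x : Fin n → ℝ,
      f (torusProj n x) = torusProj n ((A.map (Int.cast : ℤ → ℝ)).mulVec x))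
    (hΔ : ∀ p : Torus n, homoclinic f p 0 → p = 0) :
    (∀ τ : Torus n → Torus n, ∀ p q : Torus n, homoclinic f p q → τ p = τ q → p = q) ∧
    (0 < n → ¬ Function.Surjective (fun _ : Torus n => (0 : Torus n))) := by
  have hsurj : Function.Surjective (torusProj n) := by
    intro a
    choose x hx using fun i => QuotientAddGroup.mk_surjective (a i)
    exact ⟨x, funext fun i => hx i⟩
  have hproj_add : ∀ u v : Fin n → ℝ,
      torusProj n (u + v) = torusProj n u + torusProj n v := by
    intro u v; funext i; simp [torusProj]
  have hadd : ∀ a b : Torus n, f (a + b) = f a + f b := by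
    intro a b
    obtain ⟨x, rfl⟩ := hsurj a
    obtain ⟨y, rfl⟩ := hsurj b
    rw [← hproj_add, hf, hf, hf, Matrix.mulVec_add, hproj_add]
  let φ : AddAut (Torus n) := AddEquiv.mk f.toEquiv hadd
  have hpow : ∀ k : ℤ, ⇑(f.toEquiv ^ k) = ⇑(k • φ) := by
    intro k
    have : f.toEquiv ^ k = Additive.toMul (AddAut.toPerm (Torus n) (k • φ)) := by
      rw [map_zsmul]; rfl
    rw [this]; rfl
  have key : ∀ p q : Torus n, homoclinic f p q → p = q := by
    intro p q h
    have h0 : homoclinic f (p - q) 0 := by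
      unfold homoclinic at h ⊢
      convert h using 2 with k
      rw [hpow k, dist_eq_norm, dist_eq_norm, map_sub, map_zero, sub_zero]
    have := hΔ (p - q) h0
    exact sub_eq_zero.mp this
  refine ⟨fun τ p q h _ => key p q h, ?_⟩
  intro hn hs
  obtain ⟨a, ha⟩ := hs (fun _ => ((1 / 2 : ℝ) : AddCircle (1 : ℝ)))
  have := congrFun ha ⟨0, hn⟩
  have h2 : ((1 / 2 : ℝ) : AddCircle (1 : ℝ)) = 0 := this.symm
  rw [AddCircle.coe_eq_zero_iff] at h2
  obtain ⟨m, hm⟩ := h2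
  have hr : (m : ℝ) = 1 / 2 := by simpa using hm
  have h3 : ((2 * m : ℤ) : ℝ) = ((1 : ℤ) : ℝ) := by push_cast; linarith
  have h4 : (2 * m : ℤ) = 1 := by exact_mod_cast h3
  omega
end
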